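/- Let Ω be an open convex subset of a separable Banach space X and let f : X → ℝ be a strongly α(·)-paraconvex function on Ω. Then there is a dense G_δ set A_G ⊆ Ω such that f is Gâteaux differentiable at every point of A_G. -/

import Mathlib

open Filter Topology Set

set_option linter.unnecessarySeqFocus false
set_option linter.unusedVariables false

set_option linter.unnecessarySeqFocus false

set_option maxHeartbeats 1600000 in
theorem rolewicz_locLip {X : Type*} [NormedAddCommGroup X] [NormedSpace ℝ X]
    (Ω : Set X) (hΩopen : IsOpen Ω)
    (α : ℝ → ℝ) (hαnonneg : ∀ t, 0 ≤ t → 0 ≤ α t) (hαmono : MonotoneOn α (Ici 0))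
    (f : X → ℝ) (hf : Continuous f) (C : ℝ) (hC : 0 < C)
    (hpara : ∀ x ∈ Ω, ∀ y ∈ Ω, ∀ l : ℝ, 0 ≤ l → l ≤ 1 →
        f (l • x + (1 - l) • y)
          ≤ l * f x + (1 - l) * f y + C * min l (1 - l) * α ‖x - y‖)
    (x₀ : X) (hx₀ : x₀ ∈ Ω) :
    ∃ r K : ℝ, 0 < r ∧ 0 ≤ K ∧ Metric.ball x₀ (2*r) ⊆ Ω ∧
      ∀ u ∈ Metric.ball x₀ r, ∀ v ∈ Metric.ball x₀ r, |f u - f v| ≤ K * ‖u - v‖ := by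
  obtain ⟨δ, hδ, hδΩ⟩ := Metric.isOpen_iff.1 hΩopen x₀ hx₀
  have hc : ∀ᶠ y in 𝓝 x₀, |f y - f x₀| < 1 := by
    have := (hf.tendsto x₀) (Metric.ball_mem_nhds (f x₀) one_pos)
    filter_upwards [this] with y hy
    simpa [Real.dist_eq] using hy
  obtain ⟨δ', hδ', hc'⟩ := Metric.eventually_nhds_iff_ball.1 hc
  set r : ℝ := min δ δ' / 2 with hr_def
  have hr : 0 < r := by positivity
  have h2r : Metric.ball x₀ (2*r) ⊆ Ω := by
    apply Subset.trans _ hδΩ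
    apply Metric.ball_subset_ball
    have := min_le_left δ δ'
    simp only [hr_def]; linarith
  have h2r' : Metric.ball x₀ (2*r) ⊆ Metric.ball x₀ δ' := by
    apply Metric.ball_subset_ball
    have := min_le_right δ δ'
    simp only [hr_def]; linarith
  set M : ℝ := |f x₀| + 1 with hM_def
  have hM : ∀ y ∈ Metric.ball x₀ (2*r), |f y| ≤ M := by
    intro y hy
    have := hc' y (h2r' hy)
    have := abs_sub_abs_le_abs_sub (f y) (f x₀)
    simp only [hM_def]; linarith
  clear_value r
  have hα3r : 0 ≤ α (3*r) := hαnonneg _ (by linarith)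
  have hM0 : (0:ℝ) ≤ M := by positivity
  clear_value M
  set K : ℝ := (2*M + C * α (3*r)) / r with hK_def
  have hK : 0 ≤ K := by
    apply div_nonneg _ hr.le
    nlinarith
  clear_value K
  refine ⟨r, K, hr, hK, h2r, ?_⟩
  have hrsub : Metric.ball x₀ r ⊆ Metric.ball x₀ (2*r) :=
    Metric.ball_subset_ball (by linarith)
  have key : ∀ u ∈ Metric.ball x₀ r, ∀ v ∈ Metric.ball x₀ r, f v - f u ≤ K * ‖v - u‖ := by
    intro u hu v hv
    rcases eq_or_ne v u with rfl | hne
    · simp [hK]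
    set s : ℝ := ‖v - u‖ with hs_def
    have hs : 0 < s := by
      simp only [hs_def]
      exact norm_pos_iff.2 (sub_ne_zero.2 hne)
    set w : X := v + (r/s) • (v - u) with hw_def
    have hwball : w ∈ Metric.ball x₀ (2*r) := by
      have h1 : ‖w - x₀‖ ≤ ‖v - x₀‖ + ‖(r/s) • (v - u)‖ := by
        simpa [hw_def, add_sub_right_comm] using norm_add_le (v - x₀) ((r/s) • (v - u))
      have h2 : ‖(r/s) • (v - u)‖ = r := by
        rw [norm_smul, Real.norm_eq_abs, abs_of_pos (by positivity)]
        field_simp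
        exact hs_def.symm
      have hvx : ‖v - x₀‖ < r := by simpa [Metric.mem_ball, dist_eq_norm] using hv
      simp only [Metric.mem_ball, dist_eq_norm]
      linarith
    set μ : ℝ := s/(r+s) with hμ_def
    have hμ0 : 0 ≤ μ := by positivity
    have hμ1 : μ ≤ 1 := by
      rw [hμ_def, div_le_one (by linarith)]; linarith
    have hcomb : μ • w + (1-μ) • u = v := by
      simp only [hμ_def, hw_def]
      match_scalars <;> field_simp <;> ring
    have hwu : w - u = ((s+r)/s) • (v - u) := by
      simp only [hw_def]
      match_scalars <;> field_simp <;> ring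
    have hwun : ‖w - u‖ = s + r := by
      rw [hwu, norm_smul, Real.norm_eq_abs, abs_of_pos (by positivity), ← hs_def]
      field_simp
    have hs2r : s < 2*r := by
      have hvx : dist v x₀ < r := hv
      have hux : dist u x₀ < r := hu
      have h1 : dist v u ≤ dist v x₀ + dist x₀ u := dist_triangle _ _ _
      rw [dist_comm x₀ u] at h1
      have h2 : s = dist v u := by rw [hs_def, dist_eq_norm]
      linarith
    have hαwu : α ‖w - u‖ ≤ α (3*r) := by
      apply hαmono (by simp [hwun]; linarith) (by simp; linarith)
      rw [hwun]; linarith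
    have hαwu0 : 0 ≤ α ‖w - u‖ := hαnonneg _ (norm_nonneg _)
    have hp := hpara w (h2r hwball) u (h2r (hrsub hu)) μ hμ0 hμ1
    rw [hcomb] at hp
    have hmin : min μ (1-μ) ≤ μ := min_le_left _ _
    have hfw : |f w| ≤ M := hM w hwball
    have hfu : |f u| ≤ M := hM u (hrsub hu)
    have hμr : μ * (r + s) = s := by
      rw [hμ_def]; field_simp
    clear_value s w μ
    rw [hK_def, div_mul_eq_mul_div, le_div_iff₀ hr]
    have habs1 : f w ≤ M := (abs_le.1 hfw).2
    have habs2 : -M ≤ f u := (abs_le.1 hfu).1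
    have habs3 : f u ≤ M := (abs_le.1 hfu).2
    have hμs : μ * r ≤ s := by nlinarith
    have hCmin : C * min μ (1-μ) * α ‖w - u‖ ≤ C * μ * α (3*r) := by
      have h1 : C * min μ (1-μ) * α ‖w - u‖ ≤ C * μ * α ‖w - u‖ := by
        have := mul_le_mul_of_nonneg_right (mul_le_mul_of_nonneg_left hmin hC.le) hαwu0
        linarith
      have h2 : C * μ * α ‖w - u‖ ≤ C * μ * α (3*r) := by
        have := mul_le_mul_of_nonneg_left hαwu (mul_nonneg hC.le hμ0)
        linarith
      linarith
    have e1 : f v - f u ≤ μ * (f w - f u) + C * μ * α (3*r) := by nlinarith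
    have e2 := mul_le_mul_of_nonneg_right e1 hr.le
    have e3a := mul_le_mul_of_nonneg_left (show f w - f u ≤ 2*M by linarith)
      (mul_nonneg hμ0 hr.le)
    have e3b := mul_le_mul_of_nonneg_right hμs (show (0:ℝ) ≤ 2*M by linarith)
    have e4 := mul_le_mul_of_nonneg_left hμs (mul_nonneg hC.le hα3r)
    nlinarith
  intro u hu v hv
  rw [abs_sub_le_iff]
  constructor
  · exact key v hv u hu
  · have := key u hu v hv; rwa [norm_sub_rev] at this

theorem rolewicz_alpha_zero (α : ℝ → ℝ) (hαnonneg : ∀ t, 0 ≤ t → 0 ≤ α t)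
    (hαmono : MonotoneOn α (Ici 0))
    (hαlim : Tendsto (fun t => α t / t) (𝓝[>] (0 : ℝ)) (𝓝 0)) : α 0 = 0 := by
  have h1 : Tendsto α (𝓝[>] (0:ℝ)) (𝓝 0) := by
    have h2 : Tendsto (fun t => (α t / t) * t) (𝓝[>] (0:ℝ)) (𝓝 (0*0)) := by
      apply hαlim.mul
      exact tendsto_nhdsWithin_of_tendsto_nhds tendsto_id
    rw [mul_zero] at h2
    apply h2.congr'
    filter_upwards [self_mem_nhdsWithin] with t (ht : 0 < t)
    exact div_mul_cancel₀ _ (ne_of_gt ht)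
  have h3 : α 0 ≤ 0 := by
    apply ge_of_tendsto h1
    filter_upwards [self_mem_nhdsWithin] with t (ht : 0 < t)
    exact hαmono (self_mem_Ici) (le_of_lt ht) ht.le
  linarith [hαnonneg 0 le_rfl]

theorem rolewicz_aterm (α : ℝ → ℝ) (hα0 : α 0 = 0)
    (hαlim : Tendsto (fun t => α t / t) (𝓝[>] (0 : ℝ)) (𝓝 0))
    (C c : ℝ) (hc : 0 ≤ c) :
    Tendsto (fun t => C * α (t * c) / t) (𝓝[>] (0:ℝ)) (𝓝 0) := by
  rcases eq_or_lt_of_le hc with rfl | hc'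
  · simp [hα0, tendsto_const_nhds]
  · have m1 : Tendsto (fun t : ℝ => t * c) (𝓝[>] 0) (𝓝[>] 0) := by
      apply tendsto_nhdsWithin_of_tendsto_nhds_of_eventually_within
      · have : Tendsto (fun t : ℝ => t * c) (𝓝[>] 0) (𝓝 (0 * c)) :=
          (tendsto_id.mul_const c).mono_left nhdsWithin_le_nhds
        simpa using this
      · filter_upwards [self_mem_nhdsWithin] with t (ht : 0 < t)
        exact mul_pos ht hc'
    have m2 : Tendsto (fun t : ℝ => α (t * c) / (t * c)) (𝓝[>] 0) (𝓝 0) :=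
      hαlim.comp m1
    have m3 : Tendsto (fun t : ℝ => (C * c) * (α (t * c) / (t * c))) (𝓝[>] 0)
        (𝓝 ((C * c) * 0)) := m2.const_mul _
    rw [mul_zero] at m3
    apply m3.congr'
    filter_upwards [self_mem_nhdsWithin] with t (ht : 0 < t)
    field_simp


set_option maxHeartbeats 1600000 in
theorem rolewicz_dplus {X : Type*} [NormedAddCommGroup X] [NormedSpace ℝ X]
    (Ω : Set X)
    (α : ℝ → ℝ) (hαnonneg : ∀ t, 0 ≤ t → 0 ≤ α t) (hα0 : α 0 = 0)
    (hαlim : Tendsto (fun t => α t / t) (𝓝[>] (0 : ℝ)) (𝓝 0))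
    (f : X → ℝ) (C : ℝ) (hC : 0 < C)
    (hpara : ∀ x ∈ Ω, ∀ y ∈ Ω, ∀ l : ℝ, 0 ≤ l → l ≤ 1 →
        f (l • x + (1 - l) • y)
          ≤ l * f x + (1 - l) * f y + C * min l (1 - l) * α ‖x - y‖)
    (x : X) (hx : x ∈ Ω) (r K : ℝ) (hr : 0 < r) (hK : 0 ≤ K)
    (hball : Metric.ball x (2*r) ⊆ Ω)
    (hlip : ∀ u ∈ Metric.ball x r, ∀ v ∈ Metric.ball x r, |f u - f v| ≤ K * ‖u - v‖)
    (h : X) :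
    ∃ d : ℝ, |d| ≤ K * ‖h‖ ∧
      Tendsto (fun t => (f (x + t • h) - f x) / t) (𝓝[>] (0:ℝ)) (𝓝 d) ∧
      ∀ t : ℝ, 0 < t → t * ‖h‖ < r →
        d ≤ (f (x + t • h) - f x) / t + C * α (t * ‖h‖) / t := by
  have hxr : x ∈ Metric.ball x r := by simp [hr]
  have hrΩ : Metric.ball x r ⊆ Ω := fun y hy => hball (Metric.ball_subset_ball (by linarith) hy)
  rcases eq_or_ne h 0 with rfl | hne
  · refine ⟨0, by simp, ?_, ?_⟩
    · have : (fun t : ℝ => (f (x + t • (0:X)) - f x) / t) = fun _ => 0 := by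
        funext t; simp
      rw [this]; exact tendsto_const_nhds
    · intro t ht _
      have e1 : (f (x + t • (0:X)) - f x) / t = 0 := by simp
      have e2 : C * α (t * ‖(0:X)‖) / t = 0 := by simp [hα0]
      rw [e1, e2]; norm_num
  have hn : 0 < ‖h‖ := norm_pos_iff.2 hne
  set φ : ℝ → ℝ := fun t => (f (x + t • h) - f x) / t with hφ_def
  set ψ : ℝ → ℝ := fun t => φ t + C * α (t * ‖h‖) / t with hψ_def
  have hmem : ∀ t : ℝ, 0 < t → t * ‖h‖ < r → x + t • h ∈ Metric.ball x r := by
    intro t ht htr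
    simp only [Metric.mem_ball, dist_eq_norm, add_sub_cancel_left, norm_smul,
      Real.norm_eq_abs, abs_of_pos ht]
    exact htr
  have hψ0 : ∀ t : ℝ, 0 < t → 0 ≤ C * α (t * ‖h‖) / t := by
    intro t ht
    have := hαnonneg (t * ‖h‖) (by positivity)
    positivity
  have hφbound : ∀ t : ℝ, 0 < t → t * ‖h‖ < r → |φ t| ≤ K * ‖h‖ := by
    intro t ht htr
    have h1 := hlip _ (hmem t ht htr) x hxr
    rw [add_sub_cancel_left, norm_smul, Real.norm_eq_abs, abs_of_pos ht] at h1
    have : |φ t| = |f (x + t • h) - f x| / t := by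
      rw [hφ_def]; rw [abs_div, abs_of_pos ht]
    rw [this, div_le_iff₀ ht]
    calc |f (x + t • h) - f x| ≤ K * (t * ‖h‖) := h1
      _ = K * ‖h‖ * t := by ring
  -- key monotonicity-type inequality
  have key1 : ∀ l t : ℝ, 0 < l → l ≤ 1 → 0 < t → t * ‖h‖ < r → φ (l * t) ≤ ψ t := by
    intro l t hl hl1 ht htr
    have hxt : x + t • h ∈ Ω := hrΩ (hmem t ht htr)
    have hp := hpara (x + t • h) hxt x hx l hl.le hl1
    have hcomb : l • (x + t • h) + (1 - l) • x = x + (l * t) • h := by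
      match_scalars <;> ring
    have hnorm : ‖(x + t • h) - x‖ = t * ‖h‖ := by
      rw [add_sub_cancel_left, norm_smul, Real.norm_eq_abs, abs_of_pos ht]
    rw [hcomb, hnorm] at hp
    have hα : 0 ≤ α (t * ‖h‖) := hαnonneg _ (by positivity)
    have hmin : min l (1 - l) ≤ l := min_le_left _ _
    have e : f (x + (l * t) • h) - f x ≤ l * (f (x + t • h) - f x) + C * l * α (t * ‖h‖) := by
      nlinarith [mul_le_mul_of_nonneg_right (mul_le_mul_of_nonneg_left hmin hC.le) hα]
    have hlt : 0 < l * t := mul_pos hl ht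
    rw [hφ_def, hψ_def]
    simp only []
    rw [div_add_div _ _ (ne_of_gt ht) (ne_of_gt ht), div_le_div_iff₀ hlt (by positivity)]
    have e2 := mul_le_mul_of_nonneg_right e ht.le
    nlinarith [e2]
  set t₁ : ℝ := r / ‖h‖ with ht₁_def
  have ht₁ : 0 < t₁ := by positivity
  have htlt : ∀ t : ℝ, t ∈ Ioo 0 t₁ → t * ‖h‖ < r := by
    intro t ht
    rw [← lt_div_iff₀ hn]
    exact ht.2
  set S : Set ℝ := ψ '' Ioo 0 t₁ with hS_def
  have hSne : S.Nonempty := ⟨ψ (t₁/2), ⟨t₁/2, ⟨by positivity, by linarith⟩, rfl⟩⟩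
  have hSbdd : BddBelow S := by
    refine ⟨-(K * ‖h‖), ?_⟩
    rintro y ⟨t, ht, rfl⟩
    have h1 := hφbound t ht.1 (htlt t ht)
    have h2 := hψ0 t ht.1
    rw [hψ_def]
    have := abs_le.1 h1
    simp only []
    linarith [this.1]
  set d : ℝ := sInf S with hd_def
  have hdle : ∀ t : ℝ, 0 < t → t * ‖h‖ < r → d ≤ ψ t := by
    intro t ht htr
    apply csInf_le hSbdd
    exact ⟨t, ⟨ht, by rwa [← lt_div_iff₀ hn] at htr⟩, rfl⟩
  have htend : Tendsto φ (𝓝[>] (0:ℝ)) (𝓝 d) := by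
    rw [tendsto_order]
    constructor
    · intro a ha
      have hat := rolewicz_aterm α hα0 hαlim C ‖h‖ hn.le
      have hev : ∀ᶠ t in 𝓝[>] (0:ℝ), C * α (t * ‖h‖) / t < d - a := by
        apply hat.eventually_lt_const
        linarith
      filter_upwards [hev, Ioo_mem_nhdsGT_of_mem (by constructor <;> [exact le_rfl; exact ht₁] : (0:ℝ) ∈ Ico 0 t₁)] with t h1 h2
      have h3 := hdle t h2.1 (htlt t h2)
      rw [hψ_def] at h3
      simp only [] at h3
      linarith
    · intro a ha
      obtain ⟨y, hyS, hya⟩ := exists_lt_of_csInf_lt hSne (by rwa [← hd_def])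
      obtain ⟨t₂, ht₂, rfl⟩ := hyS
      filter_upwards [Ioo_mem_nhdsGT_of_mem
        (by constructor <;> [exact le_rfl; exact ht₂.1] : (0:ℝ) ∈ Ico 0 t₂)] with t ht
      have hl : 0 < t / t₂ := div_pos ht.1 ht₂.1
      have hl1 : t / t₂ ≤ 1 := by
        rw [div_le_one ht₂.1]; exact ht.2.le
      have := key1 (t / t₂) t₂ hl hl1 ht₂.1 (htlt t₂ ht₂)
      rw [div_mul_cancel₀ _ (ne_of_gt ht₂.1)] at this
      linarith
  refine ⟨d, ?_, htend, fun t ht htr => by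
    have := hdle t ht htr
    rw [hψ_def] at this
    simpa using this⟩
  rw [abs_le]
  constructor
  · apply ge_of_tendsto htend
    filter_upwards [Ioo_mem_nhdsGT_of_mem (by constructor <;> [exact le_rfl; exact ht₁] : (0:ℝ) ∈ Ico 0 t₁)] with t ht
    have := abs_le.1 (hφbound t ht.1 (htlt t ht))
    linarith [this.1]
  · apply le_of_tendsto htend
    filter_upwards [Ioo_mem_nhdsGT_of_mem (by constructor <;> [exact le_rfl; exact ht₁] : (0:ℝ) ∈ Ico 0 t₁)] with t ht
    exact (abs_le.1 (hφbound t ht.1 (htlt t ht))).2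


theorem rolewicz_evmem {X : Type*} [NormedAddCommGroup X] [NormedSpace ℝ X]
    (Ω : Set X) (hΩopen : IsOpen Ω) (x : X) (hx : x ∈ Ω) (g : X) (c : ℝ) :
    ∀ᶠ t in 𝓝[>] (0:ℝ), x + (c*t) • g ∈ Ω := by
  have h1 : Tendsto (fun t : ℝ => x + (c*t) • g) (𝓝[>] (0:ℝ)) (𝓝 x) := by
    have : Tendsto (fun t : ℝ => x + (c*t) • g) (𝓝 (0:ℝ)) (𝓝 (x + (c*0) • g)) := by
      apply Tendsto.const_add
      exact ((tendsto_id.const_mul c).smul_const g)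
    simpa using this.mono_left nhdsWithin_le_nhds
  exact h1.eventually (hΩopen.mem_nhds hx)

theorem rolewicz_scale : ∀ c : ℝ, 0 < c →
    Tendsto (fun t : ℝ => c * t) (𝓝[>] (0:ℝ)) (𝓝[>] (0:ℝ)) := by
  intro c hc
  apply tendsto_nhdsWithin_of_tendsto_nhds_of_eventually_within
  · have : Tendsto (fun t : ℝ => c * t) (𝓝[>] (0:ℝ)) (𝓝 (c * 0)) :=
      (tendsto_id.const_mul c).mono_left nhdsWithin_le_nhds
    simpa using this
  · filter_upwards [self_mem_nhdsWithin] with t (ht : 0 < t)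
    exact mul_pos hc ht

set_option maxHeartbeats 1600000 in
theorem rolewicz_subadd {X : Type*} [NormedAddCommGroup X] [NormedSpace ℝ X]
    (Ω : Set X) (hΩopen : IsOpen Ω)
    (α : ℝ → ℝ) (hαnonneg : ∀ t, 0 ≤ t → 0 ≤ α t) (hα0 : α 0 = 0)
    (hαlim : Tendsto (fun t => α t / t) (𝓝[>] (0 : ℝ)) (𝓝 0))
    (f : X → ℝ) (C : ℝ) (hC : 0 < C)
    (hpara : ∀ x ∈ Ω, ∀ y ∈ Ω, ∀ l : ℝ, 0 ≤ l → l ≤ 1 →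
        f (l • x + (1 - l) • y)
          ≤ l * f x + (1 - l) * f y + C * min l (1 - l) * α ‖x - y‖)
    (x : X) (hx : x ∈ Ω) (h k : X) (a b c : ℝ)
    (Ta : Tendsto (fun t => (f (x + t • h) - f x) / t) (𝓝[>] (0:ℝ)) (𝓝 a))
    (Tb : Tendsto (fun t => (f (x + t • k) - f x) / t) (𝓝[>] (0:ℝ)) (𝓝 b))
    (Tc : Tendsto (fun t => (f (x + t • (h+k)) - f x) / t) (𝓝[>] (0:ℝ)) (𝓝 c)) :
    c ≤ a + b := by
  have T2 : Tendsto (fun t : ℝ => (f (x + (2*t) • h) - f x) / (2*t)) (𝓝[>] (0:ℝ)) (𝓝 a) :=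
    Ta.comp (rolewicz_scale 2 two_pos)
  have T3 : Tendsto (fun t : ℝ => (f (x + (2*t) • k) - f x) / (2*t)) (𝓝[>] (0:ℝ)) (𝓝 b) :=
    Tb.comp (rolewicz_scale 2 two_pos)
  have T4 := rolewicz_aterm α hα0 hαlim (C/2) (2*‖h-k‖) (by positivity)
  have T5 : Tendsto (fun t : ℝ => (f (x + (2*t) • h) - f x) / (2*t)
      + (f (x + (2*t) • k) - f x) / (2*t) + (C/2) * α (t * (2*‖h-k‖)) / t)
      (𝓝[>] (0:ℝ)) (𝓝 (a + b + 0)) := (T2.add T3).add T4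
  rw [add_zero] at T5
  apply le_of_tendsto_of_tendsto Tc T5
  filter_upwards [rolewicz_evmem Ω hΩopen x hx h 2, rolewicz_evmem Ω hΩopen x hx k 2,
    self_mem_nhdsWithin] with t hth htk (ht : 0 < t)
  have hp := hpara (x + (2*t) • h) hth (x + (2*t) • k) htk (1/2) (by norm_num) (by norm_num)
  have hcomb : (1/2 : ℝ) • (x + (2*t) • h) + (1 - 1/2 : ℝ) • (x + (2*t) • k)
      = x + t • (h + k) := by
    match_scalars <;> ring
  have hdiff : (x + (2*t) • h) - (x + (2*t) • k) = (2*t) • (h - k) := by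
    match_scalars <;> ring
  have hnorm : ‖(x + (2*t) • h) - (x + (2*t) • k)‖ = t * (2*‖h-k‖) := by
    rw [hdiff, norm_smul, Real.norm_eq_abs, abs_of_pos (by linarith)]
    ring
  rw [hcomb, hnorm] at hp
  norm_num at hp
  have hrhs : ((f (x + (2*t) • h) - f x) / (2*t) + (f (x + (2*t) • k) - f x) / (2*t)
      + (C/2) * α (t * (2*‖h-k‖)) / t) * t
      = (f (x + (2*t) • h) - f x)/2 + (f (x + (2*t) • k) - f x)/2
        + (C/2) * α (t * (2*‖h-k‖)) := by
    field_simp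
  rw [smul_add, div_le_iff₀ ht, hrhs]
  linarith

set_option maxHeartbeats 1600000 in
theorem rolewicz_oddge {X : Type*} [NormedAddCommGroup X] [NormedSpace ℝ X]
    (Ω : Set X) (hΩopen : IsOpen Ω)
    (α : ℝ → ℝ) (hαnonneg : ∀ t, 0 ≤ t → 0 ≤ α t) (hα0 : α 0 = 0)
    (hαlim : Tendsto (fun t => α t / t) (𝓝[>] (0 : ℝ)) (𝓝 0))
    (f : X → ℝ) (C : ℝ) (hC : 0 < C)
    (hpara : ∀ x ∈ Ω, ∀ y ∈ Ω, ∀ l : ℝ, 0 ≤ l → l ≤ 1 →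
        f (l • x + (1 - l) • y)
          ≤ l * f x + (1 - l) * f y + C * min l (1 - l) * α ‖x - y‖)
    (x : X) (hx : x ∈ Ω) (h : X) (a b : ℝ)
    (Ta : Tendsto (fun t => (f (x + t • h) - f x) / t) (𝓝[>] (0:ℝ)) (𝓝 a))
    (Tb : Tendsto (fun t => (f (x + t • (-h)) - f x) / t) (𝓝[>] (0:ℝ)) (𝓝 b)) :
    0 ≤ a + b := by
  have T4 := rolewicz_aterm α hα0 hαlim C (2*‖h‖) (by positivity)
  have T5 : Tendsto (fun t : ℝ => (f (x + t • h) - f x) / t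
      + (f (x + t • (-h)) - f x) / t + C * α (t * (2*‖h‖)) / t)
      (𝓝[>] (0:ℝ)) (𝓝 (a + b + 0)) := (Ta.add Tb).add T4
  rw [add_zero] at T5
  apply le_of_tendsto_of_tendsto tendsto_const_nhds T5
  filter_upwards [rolewicz_evmem Ω hΩopen x hx h 1, rolewicz_evmem Ω hΩopen x hx (-h) 1,
    self_mem_nhdsWithin] with t hth htk (ht : 0 < t)
  rw [one_mul] at hth htk
  have hp := hpara (x + t • h) hth (x + t • (-h)) htk (1/2) (by norm_num) (by norm_num)
  have hcomb : (1/2 : ℝ) • (x + t • h) + (1 - 1/2 : ℝ) • (x + t • (-h)) = x := by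
    match_scalars <;> ring
  have hdiff : (x + t • h) - (x + t • (-h)) = (2*t) • h := by
    match_scalars <;> ring
  have hnorm : ‖(x + t • h) - (x + t • (-h))‖ = t * (2*‖h‖) := by
    rw [hdiff, norm_smul, Real.norm_eq_abs, abs_of_pos (by linarith)]
    ring
  rw [hcomb, hnorm] at hp
  norm_num at hp
  rw [show x + -(t • h) = x + t • (-h) by rw [smul_neg]] at hp
  have hrhs : ((f (x + t • h) - f x) / t + (f (x + t • (-h)) - f x) / t
      + C * α (t * (2*‖h‖)) / t) * t
      = (f (x + t • h) - f x) + (f (x + t • (-h)) - f x) + C * α (t * (2*‖h‖)) := by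
    field_simp
  rw [← sub_nonneg, ← sub_zero (_ + _ + _)]
  have ht' : (0:ℝ) ≤ (((f (x + t • h) - f x) / t + (f (x + t • (-h)) - f x) / t
      + C * α (t * (2*‖h‖)) / t) * t) / t := by
    rw [hrhs]
    apply div_nonneg _ ht.le
    linarith
  rw [mul_div_cancel_right₀ _ (ne_of_gt ht)] at ht'
  linarith

set_option maxHeartbeats 1600000 in
theorem rolewicz_homog {X : Type*} [NormedAddCommGroup X] [NormedSpace ℝ X]
    (f : X → ℝ) (x : X) (h : X) (c : ℝ) (hc : 0 < c) (a e : ℝ)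
    (Ta : Tendsto (fun t => (f (x + t • h) - f x) / t) (𝓝[>] (0:ℝ)) (𝓝 a))
    (Te : Tendsto (fun t => (f (x + t • (c • h)) - f x) / t) (𝓝[>] (0:ℝ)) (𝓝 e)) :
    e = c * a := by
  have T2 : Tendsto (fun t : ℝ => c * ((f (x + (c*t) • h) - f x) / (c*t))) (𝓝[>] (0:ℝ))
      (𝓝 (c * a)) := (Ta.comp (rolewicz_scale c hc)).const_mul c
  have heq : ∀ᶠ t in 𝓝[>] (0:ℝ), c * ((f (x + (c*t) • h) - f x) / (c*t))
      = (f (x + t • (c • h)) - f x) / t := by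
    filter_upwards [self_mem_nhdsWithin] with t (ht : 0 < t)
    have : (c*t) • h = t • (c • h) := by
      rw [smul_smul, mul_comm]
    rw [this]
    field_simp
  exact tendsto_nhds_unique Te (T2.congr' heq)

set_option maxHeartbeats 3200000 in
theorem rolewicz_dense {X : Type*} [NormedAddCommGroup X] [NormedSpace ℝ X]
    (Ω : Set X) (f : X → ℝ) (h : X) (n : ℕ)
    (x : X) (hx : x ∈ Ω) (r K : ℝ) (hr : 0 < r) (hK : 0 ≤ K)
    (hball : Metric.ball x (2*r) ⊆ Ω)
    (hlip : ∀ u ∈ Metric.ball x r, ∀ v ∈ Metric.ball x r, |f u - f v| ≤ K * ‖u - v‖) :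
    x ∈ closure (⋃ (t : ℝ) (_ : t ∈ Ioo (0:ℝ) (1/((n:ℝ)+1))),
      {y | y + t • h ∈ Ω ∧ y - t • h ∈ Ω ∧
        f (y + t • h) + f (y - t • h) - 2 * f y < t/((n:ℝ)+1)}) := by
  have hrΩ : Metric.ball x r ⊆ Ω := fun y hy => hball (Metric.ball_subset_ball (by linarith) hy)
  rw [Metric.mem_closure_iff]
  intro ε hε
  rcases eq_or_ne h 0 with rfl | hne
  · refine ⟨x, ?_, by simpa using hε⟩
    refine mem_iUnion₂.2 ⟨1/(2*((n:ℝ)+1)), ⟨by positivity, ?_⟩, ?_⟩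
    · rw [div_lt_div_iff₀ (by positivity) (by positivity)]
      nlinarith [Nat.cast_nonneg (α := ℝ) n]
    · simp only [smul_zero, add_zero, sub_zero, mem_setOf_eq]
      have hp0 : (0:ℝ) < 1/(2*((n:ℝ)+1)) / ((n:ℝ)+1) := by positivity
      exact ⟨hx, hx, by linarith⟩
  · have hn : 0 < ‖h‖ := norm_pos_iff.2 hne
    set ε' : ℝ := min ε r with hε'_def
    have hε' : 0 < ε' := lt_min hε hr
    obtain ⟨m0, hm0⟩ := exists_nat_gt (2*K*‖h‖*((n:ℝ)+1))
    set m : ℕ := m0 + 2 with hm_def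
    set t : ℝ := min (ε' / (2*((m:ℝ)+1)*‖h‖)) (1/(2*((n:ℝ)+1))) with ht_def
    have ht : 0 < t := lt_min (by positivity) (by positivity)
    have htn : t < 1/((n:ℝ)+1) := by
      apply lt_of_le_of_lt (min_le_right _ _)
      rw [div_lt_div_iff₀ (by positivity) (by positivity)]
      nlinarith [Nat.cast_nonneg (α := ℝ) n]
    have ht1 : t * (2*((m:ℝ)+1)*‖h‖) ≤ ε' := by
      have := min_le_left (ε' / (2*((m:ℝ)+1)*‖h‖)) (1/(2*((n:ℝ)+1)))
      rw [← ht_def] at this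
      calc t * (2*((m:ℝ)+1)*‖h‖) ≤ (ε' / (2*((m:ℝ)+1)*‖h‖)) * (2*((m:ℝ)+1)*‖h‖) := by
            apply mul_le_mul_of_nonneg_right this (by positivity)
        _ = ε' := by field_simp
    set y : ℕ → X := fun k => x + ((k:ℝ)*t) • h with hy_def
    have hmt : (m:ℝ)*t*‖h‖ < ε'/2 := by
      have hmpos : (0:ℝ) ≤ (m:ℝ) := Nat.cast_nonneg _
      nlinarith [mul_pos ht hn]
    have hydist : ∀ k : ℕ, k ≤ m → dist x (y k) < ε' / 2 := by
      intro k hk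
      have : dist x (y k) = (k:ℝ)*t*‖h‖ := by
        rw [hy_def]
        simp only [dist_eq_norm]
        rw [show x - (x + ((k:ℝ)*t) • h) = -(((k:ℝ)*t) • h) by abel, norm_neg, norm_smul,
          Real.norm_eq_abs, abs_of_nonneg (by positivity)]
      rw [this]
      have hkm : (k:ℝ) ≤ (m:ℝ) := Nat.cast_le.2 hk
      have : (k:ℝ)*t*‖h‖ ≤ (m:ℝ)*t*‖h‖ := by
        apply mul_le_mul_of_nonneg_right (mul_le_mul_of_nonneg_right hkm ht.le) hn.le
      linarith
    have hyball : ∀ k : ℕ, k ≤ m → y k ∈ Metric.ball x r := by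
      intro k hk
      rw [Metric.mem_ball, dist_comm]
      have := hydist k hk
      have hεr : ε' ≤ r := min_le_right _ _
      linarith
    have hyΩ : ∀ k : ℕ, k ≤ m → y k ∈ Ω := fun k hk => hrΩ (hyball k hk)
    by_contra hcon
    push_neg at hcon
    have hfail : ∀ k : ℕ, k ≤ m0 →
        t/((n:ℝ)+1) ≤ f (y (k+2)) + f (y k) - 2 * f (y (k+1)) := by
      intro k hk
      by_contra hlt
      push_neg at hlt
      have hy1 : y (k+1) + t • h = y (k+2) := by
        simp only [hy_def]
        push_cast
        match_scalars <;> ring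
      have hy2 : y (k+1) - t • h = y k := by
        simp only [hy_def]
        push_cast
        match_scalars <;> ring
      have hyU : y (k+1) ∈ ⋃ (t : ℝ) (_ : t ∈ Ioo (0:ℝ) (1/((n:ℝ)+1))),
          {y | y + t • h ∈ Ω ∧ y - t • h ∈ Ω ∧
            f (y + t • h) + f (y - t • h) - 2 * f y < t/((n:ℝ)+1)} := by
        refine mem_iUnion₂.2 ⟨t, ⟨ht, htn⟩, ?_⟩
        simp only [mem_setOf_eq]
        rw [hy1, hy2]
        exact ⟨hyΩ (k+2) (by omega), hyΩ k (by omega), hlt⟩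
      have hdist := hydist (k+1) (by omega)
      have hεε : ε' / 2 < ε := by
        have := min_le_left ε r
        linarith
      exact absurd (hcon _ hyU) (not_le.2 (by linarith))
    have tele := Finset.sum_range_sub (fun k => f (y (k+1)) - f (y k)) (m0+1)
    have hsum : ((m0:ℝ)+1) * (t/((n:ℝ)+1)) ≤
        ∑ i ∈ Finset.range (m0+1),
          ((f (y (i+1+1)) - f (y (i+1))) - (f (y (i+1)) - f (y i))) := by
      have hcard := Finset.card_nsmul_le_sum (Finset.range (m0+1))
        (fun i => (f (y (i+1+1)) - f (y (i+1))) - (f (y (i+1)) - f (y i))) (t/((n:ℝ)+1))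
        (fun i hi => by
          have hi' : i ≤ m0 := by
            have := Finset.mem_range.1 hi; omega
          have := hfail i hi'
          ring_nf
          ring_nf at this
          linarith)
      rw [Finset.card_range] at hcard
      have hc2 : ((m0+1 : ℕ):ℝ) * (t/((n:ℝ)+1)) ≤ ∑ i ∈ Finset.range (m0+1),
          ((f (y (i+1+1)) - f (y (i+1))) - (f (y (i+1)) - f (y i))) := by
        rw [← nsmul_eq_mul]; exact hcard
      push_cast at hc2
      linarith
    rw [tele] at hsum
    have hend1 : |f (y (m0+1+1)) - f (y (m0+1))| ≤ K * (t * ‖h‖) := by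
      have := hlip _ (hyball (m0+2) (by omega)) _ (hyball (m0+1) (by omega))
      have hd : y (m0+1+1) - y (m0+1) = t • h := by
        simp only [hy_def]
        push_cast
        match_scalars <;> ring
      rw [show (m0+1+1) = m0+2 from rfl] at hd ⊢
      rw [hd] at this
      rw [norm_smul, Real.norm_eq_abs, abs_of_pos ht] at this
      linarith
    have hend2 : |f (y 1) - f (y 0)| ≤ K * (t * ‖h‖) := by
      have := hlip _ (hyball 1 (by omega)) _ (hyball 0 (by omega))
      have hd : y 1 - y 0 = t • h := by
        simp only [hy_def]
        push_cast
        match_scalars <;> ring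
      rw [hd] at this
      rw [norm_smul, Real.norm_eq_abs, abs_of_pos ht] at this
      linarith
    have habs1 := abs_le.1 hend1
    have habs2 := abs_le.1 hend2
    have hfin : ((m0:ℝ)+1) * (t/((n:ℝ)+1)) ≤ 2 * (K * (t * ‖h‖)) := by
      linarith
    have hnp : (0:ℝ) < (n:ℝ)+1 := by positivity
    have e1 : ((m0:ℝ)+1) * (t/((n:ℝ)+1)) * ((n:ℝ)+1) = ((m0:ℝ)+1) * t := by field_simp
    have e2 := mul_le_mul_of_nonneg_right hfin (le_of_lt hnp)
    rw [e1] at e2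
    nlinarith [mul_lt_mul_of_pos_right hm0 ht]

set_option maxHeartbeats 6400000 in
theorem rolewicz_gateaux_scalar
    {X : Type*} [NormedAddCommGroup X] [NormedSpace ℝ X] [CompleteSpace X]
    [TopologicalSpace.SeparableSpace X]
    (Ω : Set X) (hΩopen : IsOpen Ω) (hΩconv : Convex ℝ Ω)
    (α : ℝ → ℝ) (hαnonneg : ∀ t, 0 ≤ t → 0 ≤ α t) (hαmono : MonotoneOn α (Ici 0))
    (hαlim : Tendsto (fun t => α t / t) (𝓝[>] (0 : ℝ)) (𝓝 0))
    (f : X → ℝ) (hf : Continuous f) (C : ℝ) (hC : 0 < C)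
    (hpara : ∀ x ∈ Ω, ∀ y ∈ Ω, ∀ l : ℝ, 0 ≤ l → l ≤ 1 →
        f (l • x + (1 - l) • y)
          ≤ l * f x + (1 - l) * f y + C * min l (1 - l) * α ‖x - y‖) :
    ∃ A : Set X, A ⊆ Ω ∧ IsGδ A ∧ Ω ⊆ closure A ∧
      ∀ x₀ ∈ A, ∃ L : X →L[ℝ] ℝ, ∀ h : X,
        Tendsto (fun t : ℝ => (f (x₀ + t • h) - f x₀) / t) (𝓝[≠] 0) (𝓝 (L h)) := by
  have hα0 : α 0 = 0 := rolewicz_alpha_zero α hαnonneg hαmono hαlim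
  choose! r K hr hK hball hlip using fun x hx =>
    rolewicz_locLip Ω hΩopen α hαnonneg hαmono f hf C hC hpara x hx
  choose! d hdbound hdtend hdle using fun x hx h =>
    rolewicz_dplus Ω α hαnonneg hα0 hαlim f C hC hpara x hx (r x) (K x)
      (hr x hx) (hK x hx) (hball x hx) (hlip x hx) h
  obtain ⟨D, hDc, hDd⟩ := TopologicalSpace.exists_countable_dense X
  set U : X → ℕ → Set X := fun h n =>
    ⋃ (t : ℝ) (_ : t ∈ Ioo (0:ℝ) (1/((n:ℝ)+1))),
      {y | y + t • h ∈ Ω ∧ y - t • h ∈ Ω ∧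
        f (y + t • h) + f (y - t • h) - 2 * f y < t/((n:ℝ)+1)} with hU_def
  have hUopen : ∀ h n, IsOpen (U h n) := by
    intro h n
    apply isOpen_iUnion; intro t; apply isOpen_iUnion; intro ht
    have heq : {y : X | y + t • h ∈ Ω ∧ y - t • h ∈ Ω ∧
        f (y + t • h) + f (y - t • h) - 2 * f y < t/((n:ℝ)+1)}
        = ((fun y => y + t • h) ⁻¹' Ω) ∩ (((fun y => y - t • h) ⁻¹' Ω) ∩
          {y | f (y + t • h) + f (y - t • h) - 2 * f y < t/((n:ℝ)+1)}) := rfl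
    rw [heq]
    refine (hΩopen.preimage (by continuity)).inter
      ((hΩopen.preimage (by continuity)).inter ?_)
    exact isOpen_lt (by continuity) continuous_const
  have hUdense : ∀ h n, Ω ⊆ closure (U h n) := by
    intro h n x hx
    exact rolewicz_dense Ω f h n x hx (r x) (K x) (hr x hx) (hK x hx) (hball x hx) (hlip x hx)
  set Wfam : Set (Set X) :=
    (fun p : X × ℕ => U p.1 p.2 ∪ (closure Ω)ᶜ) '' (D ×ˢ (univ : Set ℕ)) with hW_def
  have hWc : Wfam.Countable := (hDc.prod countable_univ).image _
  have hWo : ∀ s ∈ Wfam, IsOpen s := by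
    rintro s ⟨⟨h, n⟩, _, rfl⟩
    exact (hUopen h n).union isClosed_closure.isOpen_compl
  have hWd : ∀ s ∈ Wfam, Dense s := by
    rintro s ⟨⟨h, n⟩, _, rfl⟩
    intro z
    rcases em (z ∈ closure Ω) with hz | hz
    · have h1 : closure Ω ⊆ closure (U h n) :=
        closure_minimal (hUdense h n) isClosed_closure
      exact closure_mono subset_union_left (h1 hz)
    · exact subset_closure (Or.inr hz)
  have hdense : Dense (⋂₀ Wfam) := dense_sInter_of_isOpen hWo hWc hWd
  refine ⟨Ω ∩ ⋂₀ Wfam, inter_subset_left, ?_, ?_, ?_⟩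
  · exact (hΩopen.isGδ).inter (IsGδ.sInter (fun s hs => (hWo s hs).isGδ) hWc)
  · exact hdense.open_subset_closure_inter hΩopen
  · rintro x₀ ⟨hx₀, hx₀W⟩
    have hx₀U : ∀ h ∈ D, ∀ n : ℕ, x₀ ∈ U h n := by
      intro h hD n
      have := hx₀W _ ⟨(h, n), ⟨hD, mem_univ _⟩, rfl⟩
      rcases this with h1 | h1
      · exact h1
      · exact absurd (subset_closure hx₀) h1
    have hsub : ∀ h k : X, d x₀ (h+k) ≤ d x₀ h + d x₀ k := fun h k =>
      rolewicz_subadd Ω hΩopen α hαnonneg hα0 hαlim f C hC hpara x₀ hx₀ h k _ _ _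
        (hdtend x₀ hx₀ h) (hdtend x₀ hx₀ k) (hdtend x₀ hx₀ (h+k))
    have hodd : ∀ h : X, 0 ≤ d x₀ h + d x₀ (-h) := fun h =>
      rolewicz_oddge Ω hΩopen α hαnonneg hα0 hαlim f C hC hpara x₀ hx₀ h _ _
        (hdtend x₀ hx₀ h) (hdtend x₀ hx₀ (-h))
    have hhom : ∀ (c : ℝ), 0 < c → ∀ h, d x₀ (c • h) = c * d x₀ h := fun c hc h =>
      rolewicz_homog f x₀ h c hc _ _ (hdtend x₀ hx₀ h) (hdtend x₀ hx₀ (c • h))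
    have hd0 : d x₀ 0 = 0 := by
      have h1 : |d x₀ 0| ≤ 0 := by simpa using hdbound x₀ hx₀ 0
      exact abs_eq_zero.1 (le_antisymm h1 (abs_nonneg _))
    have hlipd : ∀ h k : X, d x₀ h - d x₀ k ≤ K x₀ * ‖h - k‖ := by
      intro h k
      have h1 := hsub (h - k) k
      rw [sub_add_cancel] at h1
      have h2 : d x₀ (h - k) ≤ K x₀ * ‖h - k‖ := (abs_le.1 (hdbound x₀ hx₀ (h-k))).2
      linarith
    have hcont : Continuous (d x₀) := by
      have hL : LipschitzWith (Real.toNNReal (K x₀)) (d x₀) := by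
        rw [lipschitzWith_iff_dist_le_mul]
        intro h k
        rw [Real.dist_eq, Real.coe_toNNReal _ (hK x₀ hx₀), dist_eq_norm]
        rw [abs_sub_le_iff]
        exact ⟨hlipd h k, by have := hlipd k h; rwa [norm_sub_rev] at this⟩
      exact hL.continuous
    have hoddD : ∀ h ∈ D, d x₀ h + d x₀ (-h) = 0 := by
      intro h hD
      refine le_antisymm ?_ (hodd h)
      rcases eq_or_ne h 0 with rfl | hne
      · simp [hd0]
      have hn : 0 < ‖h‖ := norm_pos_iff.2 hne
      refine le_of_forall_pos_le_add ?_
      intro δ hδ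
      have hat := rolewicz_aterm α hα0 hαlim C ‖h‖ hn.le
      have hev : ∀ᶠ t in 𝓝[>] (0:ℝ), C * α (t * ‖h‖) / t < δ/4 :=
        hat.eventually_lt_const (by positivity)
      obtain ⟨t₀, ht₀, hsub₀⟩ := mem_nhdsGT_iff_exists_Ioo_subset.1 hev
      have ht₀' : (0:ℝ) < t₀ := ht₀
      obtain ⟨n, hnn⟩ := exists_nat_gt (max (1/t₀) (max (4/δ) (‖h‖/(r x₀))))
      have hrx : 0 < r x₀ := hr x₀ hx₀
      have hA1 : 1/t₀ < (n:ℝ) := lt_of_le_of_lt (le_max_left _ _) hnn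
      have hA2 : 4/δ < (n:ℝ) := lt_of_le_of_lt (le_trans (le_max_left _ _) (le_max_right _ _)) hnn
      have hA3 : ‖h‖/(r x₀) < (n:ℝ) := lt_of_le_of_lt (le_trans (le_max_right _ _) (le_max_right _ _)) hnn
      have hnpos : (0:ℝ) < (n:ℝ)+1 := by positivity
      have hn1 : 1/((n:ℝ)+1) < t₀ := by
        rw [div_lt_iff₀ hnpos]
        have := (div_lt_iff₀ ht₀').1 hA1
        nlinarith
      have hn2 : 1/((n:ℝ)+1) < δ/4 := by
        rw [div_lt_div_iff₀ hnpos (by norm_num : (0:ℝ) < 4)]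
        have := (div_lt_iff₀ hδ).1 hA2
        nlinarith
      have hn3 : (1/((n:ℝ)+1)) * ‖h‖ < r x₀ := by
        have := (div_lt_iff₀ hrx).1 hA3
        rw [div_mul_eq_mul_div, div_lt_iff₀ hnpos]
        nlinarith
      obtain ⟨t, htIoo, hc1, hc2, hc3⟩ := mem_iUnion₂.1 (hx₀U h hD n)
      obtain ⟨ht, htn⟩ := htIoo
      have hthr : t * ‖h‖ < r x₀ := by
        have : t * ‖h‖ < (1/((n:ℝ)+1)) * ‖h‖ := by
          exact mul_lt_mul_of_pos_right htn hn
        linarith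
      have hle1 := hdle x₀ hx₀ h t ht hthr
      have hle2 := hdle x₀ hx₀ (-h) t ht (by rwa [norm_neg])
      rw [norm_neg] at hle2
      have hsmulneg : x₀ + t • (-h) = x₀ - t • h := by
        rw [smul_neg, ← sub_eq_add_neg]
      rw [hsmulneg] at hle2
      have hq : (f (x₀ + t • h) - f x₀)/t + (f (x₀ - t • h) - f x₀)/t < 1/((n:ℝ)+1) := by
        rw [← add_div, div_lt_iff₀ ht]
        have ht' : t/((n:ℝ)+1) = (1/((n:ℝ)+1)) * t := by ring
        rw [ht'] at hc3
        linarith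
      have hα1 : C * α (t * ‖h‖) / t < δ/4 := hsub₀ ⟨ht, lt_trans htn hn1⟩
      linarith
    have hoddall : ∀ h : X, d x₀ h + d x₀ (-h) = 0 := by
      have hce : Continuous (fun h => d x₀ h + d x₀ (-h)) :=
        hcont.add (hcont.comp continuous_neg)
      have heq := Continuous.ext_on hDd hce continuous_const (fun h hD => hoddD h hD)
      intro h; exact congrFun heq h
    have hneg : ∀ h, d x₀ (-h) = - d x₀ h := fun h => by linarith [hoddall h]
    have hadd : ∀ h k, d x₀ (h + k) = d x₀ h + d x₀ k := by
      intro h k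
      refine le_antisymm (hsub h k) ?_
      have h1 := hsub (h + k) (-k)
      rw [add_neg_cancel_right, hneg k] at h1
      linarith
    have hsmul : ∀ (c : ℝ) (h : X), d x₀ (c • h) = c * d x₀ h := by
      intro c h
      rcases lt_trichotomy c 0 with hc' | rfl | hc'
      · have hh := hhom (-c) (by linarith) (-h)
        rw [neg_smul_neg] at hh
        rw [hh, hneg h]; ring
      · simp [hd0]
      · exact hhom c hc' h
    set L₀ : X →ₗ[ℝ] ℝ :=
      { toFun := d x₀, map_add' := hadd, map_smul' := by intro c h; simpa using hsmul c h }
      with hL₀_def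
    set L : X →L[ℝ] ℝ := LinearMap.mkContinuous L₀ (K x₀) (fun h => by
      rw [Real.norm_eq_abs]
      exact hdbound x₀ hx₀ h) with hL_def
    refine ⟨L, fun h => ?_⟩
    have hLh : L h = d x₀ h := rfl
    rw [hLh, ← nhdsLT_sup_nhdsGT (0:ℝ), tendsto_sup]
    constructor
    · have Tneg : Tendsto (fun t : ℝ => -t) (𝓝[<] (0:ℝ)) (𝓝[>] (0:ℝ)) := by
        apply tendsto_nhdsWithin_of_tendsto_nhds_of_eventually_within
        · have : Tendsto (fun t : ℝ => -t) (𝓝[<] (0:ℝ)) (𝓝 (-0)) :=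
            (tendsto_neg (0:ℝ)).mono_left nhdsWithin_le_nhds
          simpa using this
        · filter_upwards [self_mem_nhdsWithin] with t (ht : t < 0)
          simpa using ht
      have T1 := ((hdtend x₀ hx₀ (-h)).comp Tneg).neg
      have heqf : (fun t : ℝ => -((f (x₀ + (-t) • (-h)) - f x₀) / (-t)))
          = fun t : ℝ => (f (x₀ + t • h) - f x₀)/t := by
        funext t
        rw [neg_smul_neg, div_neg, neg_neg]
      have hval : -(d x₀ (-h)) = d x₀ h := by rw [hneg h]; ring
      have T2 : Tendsto (fun t : ℝ => -((f (x₀ + (-t) • (-h)) - f x₀) / (-t)))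
          (𝓝[<] (0:ℝ)) (𝓝 (d x₀ h)) := by
        rw [← hval]
        exact T1
      rw [heqf] at T2
      exact T2
    · exact hdtend x₀ hx₀ h
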